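/- Let Y ⊆ ℝ^n be a semi-convex set, written as a disjoint union Y = ∪_i Δ_i° of relative interiors of finitely many convex polytopes. Then the quantity μ(Y) := Σ_i (−1)^{dim Δ_i} is independent of the chosen decomposition. -/

import Mathlib

open Module

set_option maxHeartbeats 1000000
set_option synthInstance.maxHeartbeats 1000000

open Set Metric Module

variable {E : Type*} [NormedAddCommGroup E] [NormedSpace ℝ E]

lemma mem_relint_iff {s : Set E} {x : E} :
    x ∈ intrinsicInterior ℝ s ↔
      x ∈ affineSpan ℝ s ∧ ∃ ε > 0, ∀ y ∈ affineSpan ℝ s, dist y x < ε → y ∈ s := by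
  constructor
  · rintro ⟨y, hy, rfl⟩
    refine ⟨y.2, ?_⟩
    rw [mem_interior_iff_mem_nhds, Metric.mem_nhds_iff] at hy
    obtain ⟨ε, hε, hb⟩ := hy
    refine ⟨ε, hε, fun z hz hdz => ?_⟩
    have : (⟨z, hz⟩ : affineSpan ℝ s) ∈ ball y ε := by
      simpa [Metric.mem_ball, Subtype.dist_eq] using hdz
    exact hb this
  · rintro ⟨hx, ε, hε, h⟩
    refine ⟨⟨x, hx⟩, ?_, rfl⟩
    rw [mem_interior_iff_mem_nhds, Metric.mem_nhds_iff]
    exact ⟨ε, hε, fun z hz => h z z.2 (by simpa [Metric.mem_ball, Subtype.dist_eq] using hz)⟩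

lemma relint_relopen {s : Set E} {x : E} (hx : x ∈ intrinsicInterior ℝ s) :
    ∃ ε > 0, ∀ y ∈ affineSpan ℝ s, dist y x < ε → y ∈ intrinsicInterior ℝ s := by
  obtain ⟨y, hy, rfl⟩ := hx
  obtain ⟨ε, hε, hb⟩ := Metric.isOpen_iff.1 isOpen_interior y hy
  refine ⟨ε, hε, fun z hz hdz => ⟨⟨z, hz⟩, hb ?_, rfl⟩⟩
  simpa [Metric.mem_ball, Subtype.dist_eq] using hdz

lemma relint_combo {s : Set E} (hs : Convex ℝ s) {x y : E} (hx : x ∈ intrinsicInterior ℝ s)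
    (hy : y ∈ s) {t : ℝ} (ht0 : 0 ≤ t) (ht1 : t < 1) :
    (1 - t) • x + t • y ∈ intrinsicInterior ℝ s := by
  rw [mem_relint_iff] at hx ⊢
  obtain ⟨hxs, ε, hε, hb⟩ := hx
  have hys : y ∈ affineSpan ℝ s := subset_affineSpan ℝ s hy
  have h1t : (0:ℝ) < 1 - t := by linarith
  have hzs : (1 - t) • x + t • y ∈ affineSpan ℝ s := by
    have : (1 - t) • x + t • y = t • (y - x) + x := by
      rw [smul_sub]; module
    rw [this]
    exact AffineSubspace.vadd_mem_of_mem_direction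
      (Submodule.smul_mem _ t (AffineSubspace.vsub_mem_direction hys hxs)) hxs
  refine ⟨hzs, (1 - t) * ε, by positivity, fun w hw hdw => ?_⟩
  set z := (1 - t) • x + t • y with hz
  set w' := (1 / (1 - t)) • (w - z) + x with hw'
  have hw's : w' ∈ affineSpan ℝ s :=
    AffineSubspace.vadd_mem_of_mem_direction
      (Submodule.smul_mem _ _ (AffineSubspace.vsub_mem_direction hw hzs)) hxs
  have hdw' : dist w' x < ε := by
    have h1 : dist w' x = (1 / (1 - t)) * ‖w - z‖ := by
      rw [hw', dist_eq_norm, add_sub_cancel_right, norm_smul, Real.norm_eq_abs,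
        abs_of_pos (by positivity : (0:ℝ) < 1 / (1 - t))]
    rw [h1]
    rw [dist_eq_norm] at hdw
    rw [div_mul_eq_mul_div, one_mul, div_lt_iff₀ h1t]
    linarith [hdw]
  have hw's' : w' ∈ s := hb w' hw's hdw'
  have hwc : w = (1 - t) • w' + t • y := by
    rw [hw', hz, smul_add, smul_smul, one_div, mul_inv_cancel₀ (ne_of_gt h1t), one_smul]
    abel
  rw [hwc]
  exact hs hw's' hy (le_of_lt h1t) ht0 (by ring)

lemma relint_convex {s : Set E} (hs : Convex ℝ s) : Convex ℝ (intrinsicInterior ℝ s) := by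
  intro x hx y hy a b ha hb hab
  rcases eq_or_lt_of_le hb with hb1 | hb1
  · have : a = 1 := by linarith
    subst this
    simpa [← hb1] using hx
  · rcases lt_or_eq_of_le (show b ≤ 1 by linarith) with hb2 | hb2
    · have : a = 1 - b := by linarith
      subst this
      exact relint_combo hs hx (intrinsicInterior_subset hy) (le_of_lt hb1) hb2
    · have : a = 0 := by linarith
      subst this
      simpa [hb2] using hy

variable {F : Type*} [NormedAddCommGroup F] [NormedSpace ℝ F]

lemma mem_span_image {π : E →ₗ[ℝ] F} {s : Set E} {x : E} (hx : x ∈ affineSpan ℝ s) :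
    π x ∈ affineSpan ℝ (π '' s) := by
  rw [← LinearMap.coe_toAffineMap π, ← AffineSubspace.map_span]
  exact AffineSubspace.mem_map.2 ⟨x, hx, rfl⟩

lemma relint_image [FiniteDimensional ℝ E] (π : E →ₗ[ℝ] F) {s : Set E} (hs : Convex ℝ s) :
    π '' intrinsicInterior ℝ s = intrinsicInterior ℝ (π '' s) := by
  rcases s.eq_empty_or_nonempty with rfl | hsne
  · simp
  -- setup: right inverse with norm bound
  set V := vectorSpan ℝ s with hV
  set W := vectorSpan ℝ (π '' s) with hW
  have hWmap : V.map π = W := by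
    have := AffineMap.vectorSpan_image_eq_submodule_map (k := ℝ) (f := π.toAffineMap) (s := s)
    simpa using this
  have hπ' : ∀ v : V, π v ∈ W := fun v => hWmap ▸ Submodule.mem_map.2 ⟨v, v.2, rfl⟩
  set π' : V →ₗ[ℝ] W := LinearMap.codRestrict W (π.domRestrict V) (fun v => hπ' v) with hπ'def
  have hsurj : Function.Surjective π' := by
    rintro ⟨w, hw⟩
    rw [← hWmap] at hw
    obtain ⟨v, hv, hvw⟩ := Submodule.mem_map.1 hw
    exact ⟨⟨v, hv⟩, Subtype.ext hvw⟩
  haveI : FiniteDimensional ℝ W := by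
    rw [← hWmap]; infer_instance
  obtain ⟨g, hg⟩ := π'.exists_rightInverse_of_surjective (LinearMap.range_eq_top.2 hsurj)
  have hgc : Continuous g := g.continuous_of_finiteDimensional
  set G : W →L[ℝ] V := ⟨g, hgc⟩ with hG
  set C : ℝ := ‖G‖ + 1 with hC
  have hC0 : 0 < C := by positivity
  have hgb : ∀ w : W, ‖(g w : E)‖ ≤ C * ‖w‖ := by
    intro w
    have h1 : ‖G w‖ ≤ ‖G‖ * ‖w‖ := G.le_opNorm w
    have h2 : ‖G‖ * ‖w‖ ≤ C * ‖w‖ := by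
      apply mul_le_mul_of_nonneg_right _ (norm_nonneg _)
      simp [hC]
    calc ‖(g w : E)‖ = ‖G w‖ := rfl
    _ ≤ C * ‖w‖ := le_trans h1 h2
  have hgπ : ∀ w : W, π (g w : E) = (w : F) := by
    intro w
    have := congrFun (congrArg (fun m => m.toFun) hg) w
    have : π' (g w) = w := this
    exact congrArg Subtype.val this
  apply Set.Subset.antisymm
  · -- image of relint ⊆ relint of image
    rintro _ ⟨x, hx, rfl⟩
    rw [mem_relint_iff] at hx ⊢
    obtain ⟨hxs, ε, hε, hb⟩ := hx
    refine ⟨mem_span_image hxs, ε / C, by positivity, fun y hy hdy => ?_⟩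
    have hyd : y - π x ∈ W := by
      rw [hW, ← direction_affineSpan]
      exact AffineSubspace.vsub_mem_direction hy (mem_span_image hxs)
    set u : E := (g ⟨y - π x, hyd⟩ : E) + x with hu
    have hus : u ∈ affineSpan ℝ s := by
      apply AffineSubspace.vadd_mem_of_mem_direction _ hxs
      rw [direction_affineSpan]
      exact (g ⟨y - π x, hyd⟩).2
    have hdu : dist u x < ε := by
      rw [hu, dist_eq_norm, add_sub_cancel_right]
      calc ‖(g ⟨y - π x, hyd⟩ : E)‖ ≤ C * ‖y - π x‖ := hgb _
      _ < C * (ε / C) := by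
          apply mul_lt_mul_of_pos_left _ hC0
          rw [dist_eq_norm] at hdy; exact hdy
      _ = ε := by field_simp
    refine ⟨u, hb u hus hdu, ?_⟩
    rw [hu, map_add, hgπ]
    module
  · -- relint of image ⊆ image of relint
    intro y hy
    obtain ⟨x₀, hx₀⟩ := hsne.intrinsicInterior hs
    have hy' := hy
    rw [mem_relint_iff] at hy'
    obtain ⟨hys, ε, hε, hb⟩ := hy'
    set y₀ : F := π x₀ with hy₀
    have hy₀s : y₀ ∈ affineSpan ℝ (π '' s) :=
      mem_span_image (subset_affineSpan ℝ s (intrinsicInterior_subset hx₀))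
    set t : ℝ := ε / (2 * (‖y - y₀‖ + 1)) with ht
    have ht0 : 0 < t := by positivity
    have htb : t * ‖y - y₀‖ < ε := by
      rw [ht]
      rw [div_mul_eq_mul_div, div_lt_iff₀ (by positivity)]
      nlinarith [norm_nonneg (y - y₀), hε]
    set z : F := t • (y - y₀) + y with hz
    have hzs : z ∈ affineSpan ℝ (π '' s) := by
      apply AffineSubspace.vadd_mem_of_mem_direction _ hys
      rw [direction_affineSpan]
      exact Submodule.smul_mem _ t (by rw [← direction_affineSpan]; exact AffineSubspace.vsub_mem_direction hys hy₀s)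
    have hzmem : z ∈ π '' s := by
      apply hb z hzs
      rw [hz, dist_eq_norm, add_sub_cancel_right, norm_smul, Real.norm_eq_abs, abs_of_pos ht0]
      exact htb
    obtain ⟨w, hws, hwz⟩ := hzmem
    set τ : ℝ := 1 / (1 + t) with hτ
    have h1t : (0:ℝ) < 1 + t := by linarith
    have hτ0 : 0 ≤ τ := by positivity
    have hτ1 : τ < 1 := by
      rw [hτ, div_lt_one h1t]; linarith
    refine ⟨(1 - τ) • x₀ + τ • w, relint_combo hs hx₀ hws hτ0 hτ1, ?_⟩
    rw [map_add, map_smul, map_smul, hwz, hz, ← hy₀]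
    rw [hτ]
    have : (1 : ℝ) - 1 / (1 + t) = t / (1 + t) := by field_simp; ring
    rw [this]
    rw [smul_add, smul_smul]
    rw [smul_sub]
    match_scalars <;> field_simp <;> ring

open Set Metric Module Filter Topology
open scoped Classical

noncomputable def rlim (h : ℝ → ℤ) (t : ℝ) : ℤ :=
  if hc : ∃ c, ∀ᶠ s in 𝓝[>] t, h s = c then hc.choose else 0

lemma rlim_eq_of_eventually {h : ℝ → ℤ} {t : ℝ} {c : ℤ}
    (H : ∀ᶠ s in 𝓝[>] t, h s = c) : rlim h t = c := by
  have hex : ∃ c, ∀ᶠ s in 𝓝[>] t, h s = c := ⟨c, H⟩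
  rw [rlim, dif_pos hex]
  have H' := hex.choose_spec
  have : ∀ᶠ s in 𝓝[>] t, hex.choose = c := by
    filter_upwards [H, H'] with s h1 h2
    rw [← h1, ← h2]
  rcases this.exists with ⟨s, hs⟩
  exact hs

noncomputable def ind {α : Type*} (A : Set α) : α → ℤ := fun x => if x ∈ A then 1 else 0

lemma ind_of_mem {α : Type*} {A : Set α} {x : α} (h : x ∈ A) : ind A x = 1 := if_pos h
lemma ind_of_not_mem {α : Type*} {A : Set α} {x : α} (h : x ∉ A) : ind A x = 0 := if_neg h

/-- eventual right value of the indicator of an open interval -/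
lemma ev_ioo {a b : ℝ} (hab : a < b) (t : ℝ) :
    ∀ᶠ u in 𝓝[>] t, ind (Ioo a b) u = ind (Ico a b) t := by
  rcases lt_trichotomy t a with h | h | h
  · filter_upwards [Ioo_mem_nhdsGT_of_mem (Set.left_mem_Ico.2 h)] with u hu
    rw [ind_of_not_mem (by simp only [Set.mem_Ioo]; intro ⟨h1, _⟩; linarith [hu.2]),
      ind_of_not_mem (by simp only [Set.mem_Ico]; intro ⟨h1, _⟩; linarith)]
  · subst h
    filter_upwards [Ioo_mem_nhdsGT_of_mem (Set.left_mem_Ico.2 hab)] with u hu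
    rw [ind_of_mem hu, ind_of_mem (Set.left_mem_Ico.2 hab)]
  · rcases lt_or_ge t b with h2 | h2
    · filter_upwards [Ioo_mem_nhdsGT_of_mem (Set.left_mem_Ico.2 h2)] with u hu
      rw [ind_of_mem (Set.mem_Ioo.2 ⟨by linarith [hu.1], hu.2⟩), ind_of_mem (Set.mem_Ico.2 ⟨le_of_lt h, h2⟩)]
    · filter_upwards [self_mem_nhdsWithin] with u hu
      simp only [Set.mem_Ioi] at hu
      rw [ind_of_not_mem (by simp only [Set.mem_Ioo]; intro ⟨_, h1⟩; linarith),
        ind_of_not_mem (by simp only [Set.mem_Ico]; intro ⟨_, h1⟩; linarith)]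

lemma diff_ioo {a b : ℝ} (hab : a < b) :
    (fun t => ind (Ioo a b) t - ind (Ico a b) t) = fun t => if t = a then (-1:ℤ) else 0 := by
  funext t
  rcases eq_or_ne t a with rfl | hne
  · rw [if_pos rfl, ind_of_not_mem (by simp [Set.mem_Ioo]), ind_of_mem (Set.left_mem_Ico.2 hab)]
    ring
  · rw [if_neg hne]
    rcases lt_trichotomy t a with h | h | h
    · rw [ind_of_not_mem (by simp only [Set.mem_Ioo]; intro ⟨h1,_⟩; linarith),
        ind_of_not_mem (by simp only [Set.mem_Ico]; intro ⟨h1,_⟩; linarith)]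
      ring
    · exact absurd h hne
    · rcases lt_or_ge t b with h2 | h2
      · rw [ind_of_mem (Set.mem_Ioo.2 ⟨h, h2⟩), ind_of_mem (Set.mem_Ico.2 ⟨le_of_lt h, h2⟩)]; ring
      · rw [ind_of_not_mem (by simp only [Set.mem_Ioo]; intro ⟨_,h1⟩; linarith),
          ind_of_not_mem (by simp only [Set.mem_Ico]; intro ⟨_,h1⟩; linarith)]
        ring

lemma ev_sing (c : ℝ) (t : ℝ) : ∀ᶠ u in 𝓝[>] t, ind ({c} : Set ℝ) u = 0 := by
  rcases lt_or_ge t c with h | h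
  · filter_upwards [Ioo_mem_nhdsGT_of_mem (Set.left_mem_Ico.2 h)] with u hu
    exact ind_of_not_mem (by simp only [Set.mem_singleton_iff]; intro h1; subst h1; exact absurd hu.2 (lt_irrefl _))
  · filter_upwards [self_mem_nhdsWithin] with u hu
    simp only [Set.mem_Ioi] at hu
    exact ind_of_not_mem (by simp only [Set.mem_singleton_iff]; intro h1; subst h1; linarith)

lemma diff_sing (c : ℝ) :
    (fun t => ind ({c} : Set ℝ) t - 0) = fun t => if t = c then (1:ℤ) else 0 := by
  funext t
  rcases eq_or_ne t c with rfl | hne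
  · rw [if_pos rfl, ind_of_mem (Set.mem_singleton t), sub_zero]
  · rw [if_neg hne, ind_of_not_mem (by simpa using hne), sub_zero]

lemma finsum_if_single {a : ℝ} (v : ℤ) : ∑ᶠ t : ℝ, (if t = a then v else 0) = v := by
  rw [finsum_eq_single _ a (fun x hx => if_neg hx)]
  simp

lemma support_if_single {a : ℝ} (v : ℤ) :
    (Function.support fun t : ℝ => if t = a then v else 0).Finite := by
  apply Set.Finite.subset (Set.finite_singleton a)
  intro t ht
  simp only [Function.mem_support] at ht
  by_contra h
  exact ht (if_neg h)

noncomputable def proj (n : ℕ) : (Fin (n+1) → ℝ) →ₗ[ℝ] (Fin n → ℝ) :=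
  LinearMap.funLeft ℝ ℝ Fin.castSucc

lemma proj_snoc {n : ℕ} (x : Fin n → ℝ) (t : ℝ) : proj n (Fin.snoc x t) = x := by
  funext i
  show (Fin.snoc x t : Fin (n+1) → ℝ) (Fin.castSucc i) = x i
  simp

def evec (n : ℕ) : Fin (n+1) → ℝ := Pi.single (Fin.last n) 1

lemma evec_ne_zero (n : ℕ) : evec n ≠ 0 := by
  intro h
  have := congrFun h (Fin.last n)
  simp [evec] at this

lemma proj_evec (n : ℕ) : proj n (evec n) = 0 := by
  funext i
  show evec n (Fin.castSucc i) = (0 : Fin n → ℝ) i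
  rw [evec, Pi.single_eq_of_ne (Fin.castSucc_lt_last i).ne]
  rfl

lemma snoc_sub {n : ℕ} (x : Fin n → ℝ) (t t' : ℝ) :
    Fin.snoc x t - Fin.snoc x t' = (t - t') • evec n := by
  funext i
  refine Fin.lastCases ?_ ?_ i
  · simp only [Pi.sub_apply, Pi.smul_apply, Fin.snoc_last, evec, Pi.single_eq_same,
      smul_eq_mul, mul_one]
  · intro j
    simp only [Pi.sub_apply, Pi.smul_apply, Fin.snoc_castSucc, evec,
      Pi.single_eq_of_ne (Fin.castSucc_lt_last j).ne, smul_eq_mul, mul_zero, sub_self]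

lemma snoc_eq_vadd {n : ℕ} (x : Fin n → ℝ) (t t' : ℝ) :
    (Fin.snoc x t : Fin (n+1) → ℝ) = (t - t') • evec n + (Fin.snoc x t' : Fin (n+1) → ℝ) := by
  rw [← snoc_sub x t t']
  abel

lemma snoc_affine {n : ℕ} (x : Fin n → ℝ) {a b : ℝ} (t1 t2 : ℝ) (hab : a + b = 1) :
    (Fin.snoc x (a * t1 + b * t2) : Fin (n+1) → ℝ) = a • (Fin.snoc x t1 : Fin (n+1) → ℝ) + b • (Fin.snoc x t2 : Fin (n+1) → ℝ) := by
  funext i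
  refine Fin.lastCases ?_ ?_ i
  · simp only [Pi.add_apply, Pi.smul_apply, Fin.snoc_last, smul_eq_mul]
  · intro j
    simp only [Pi.add_apply, Pi.smul_apply, Fin.snoc_castSucc, smul_eq_mul]
    have : a * x j + b * x j = (a + b) * x j := by ring
    rw [this, hab, one_mul]

lemma vs_hull {E : Type*} [NormedAddCommGroup E] [NormedSpace ℝ E] (A : Set E) :
    vectorSpan ℝ (convexHull ℝ A) = vectorSpan ℝ A := by
  rw [← direction_affineSpan, affineSpan_convexHull, direction_affineSpan]

lemma shape {n : ℕ} (s : Finset (Fin (n+1) → ℝ)) (x : Fin n → ℝ) :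
    ∃ r : ℝ → ℤ,
      (∀ t, ∀ᶠ u in 𝓝[>] t,
        ind (intrinsicInterior ℝ (convexHull ℝ (↑s : Set (Fin (n+1) → ℝ)))) (Fin.snoc x u) = r t) ∧
      (Function.support (fun t => ind (intrinsicInterior ℝ (convexHull ℝ (↑s : Set (Fin (n+1) → ℝ)))) (Fin.snoc x t) - r t)).Finite ∧
      ∑ᶠ t, (ind (intrinsicInterior ℝ (convexHull ℝ (↑s : Set (Fin (n+1) → ℝ)))) (Fin.snoc x t) - r t)
        = (if evec n ∈ vectorSpan ℝ (convexHull ℝ (↑s : Set (Fin (n+1) → ℝ))) then -1 else 1)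
          * ind (intrinsicInterior ℝ (convexHull ℝ (↑(s.image (proj n)) : Set (Fin n → ℝ)))) x := by
  classical
  set P : Set (Fin (n+1) → ℝ) := convexHull ℝ (↑s : Set (Fin (n+1) → ℝ)) with hP
  set C := intrinsicInterior ℝ P with hC
  set Q : Set (Fin n → ℝ) := convexHull ℝ (↑(s.image (proj n)) : Set (Fin n → ℝ)) with hQ
  set D := intrinsicInterior ℝ Q with hD
  have himg : proj n '' P = Q := by
    rw [hP, hQ, Finset.coe_image, LinearMap.image_convexHull]
  have hCD : proj n '' C = D := by
    rw [hC, hD, relint_image (proj n) (convex_convexHull ℝ _), himg]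
  set fiber : Set ℝ := {t : ℝ | (Fin.snoc x t : Fin (n+1) → ℝ) ∈ C} with hfiber
  have hind : ∀ t, ind C (Fin.snoc x t) = ind fiber t := fun t => rfl
  by_cases hxD : x ∈ D
  · -- x in the projected relative interior
    obtain ⟨p, hpC, hpx⟩ : ∃ p ∈ C, proj n p = x := by
      rw [← hCD] at hxD; exact hxD
    set t₀ : ℝ := p (Fin.last n) with ht₀def
    have hsp : (Fin.snoc x t₀ : Fin (n+1) → ℝ) = p := by
      rw [← hpx]
      show (Fin.snoc (Fin.init p) (p (Fin.last n)) : Fin (n+1) → ℝ) = p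
      exact Fin.snoc_init_self p
    have ht₀ : t₀ ∈ fiber := by rw [hfiber, Set.mem_setOf_eq, hsp]; exact hpC
    by_cases he : evec n ∈ vectorSpan ℝ P
    · -- vertical direction inside: fiber is a nontrivial open interval
      have hCconv : Convex ℝ C := relint_convex (convex_convexHull ℝ _)
      have hconv : Convex ℝ fiber := by
        intro t1 ht1 t2 ht2 a b ha hb hab
        show (Fin.snoc x (a • t1 + b • t2) : Fin (n+1) → ℝ) ∈ C
        simp only [smul_eq_mul]
        rw [snoc_affine x t1 t2 hab]
        exact hCconv ht1 ht2 ha hb hab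
      have hopen : ∀ t ∈ fiber, ∃ δ > 0, Ioo (t-δ) (t+δ) ⊆ fiber := by
        intro t ht
        obtain ⟨ε, hε, hball⟩ := relint_relopen ht
        refine ⟨ε / (‖evec n‖ + 1), by positivity, fun u hu => ?_⟩
        have hdu : |u - t| < ε / (‖evec n‖ + 1) := by
          rw [abs_sub_lt_iff]
          constructor <;> [linarith [hu.2]; linarith [hu.1]]
        show (Fin.snoc x u : Fin (n+1) → ℝ) ∈ C
        apply hball
        · rw [snoc_eq_vadd x u t]
          exact AffineSubspace.vadd_mem_of_mem_direction
            (by rw [direction_affineSpan]; exact Submodule.smul_mem _ _ he)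
            (subset_affineSpan ℝ P (intrinsicInterior_subset ht))
        · rw [dist_eq_norm]
          have h1 : (Fin.snoc x u : Fin (n+1) → ℝ) - Fin.snoc x t = (u - t) • evec n :=
            snoc_sub x u t
          rw [h1, norm_smul, Real.norm_eq_abs]
          have h2 : (0:ℝ) ≤ ‖evec n‖ := norm_nonneg _
          calc |u - t| * ‖evec n‖ ≤ |u - t| * (‖evec n‖ + 1) := by nlinarith [abs_nonneg (u - t)]
          _ < ε / (‖evec n‖ + 1) * (‖evec n‖ + 1) := by
              apply mul_lt_mul_of_pos_right hdu; positivity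
          _ = ε := by field_simp
      obtain ⟨R, hR⟩ : ∃ R, ∀ y ∈ P, ‖y‖ ≤ R := by
        have := (s.finite_toSet.isCompact_convexHull ℝ).isBounded
        rwa [isBounded_iff_forall_norm_le] at this
      have habs : ∀ t ∈ fiber, |t| ≤ R := by
        intro t ht
        have h1 : (Fin.snoc x t : Fin (n+1) → ℝ) ∈ P := intrinsicInterior_subset ht
        calc |t| = ‖(Fin.snoc x t : Fin (n+1) → ℝ) (Fin.last n)‖ := by
              rw [Fin.snoc_last, Real.norm_eq_abs]
        _ ≤ ‖(Fin.snoc x t : Fin (n+1) → ℝ)‖ := norm_le_pi_norm _ _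
        _ ≤ R := hR _ h1
      have hbddA : BddAbove fiber := ⟨R, fun t ht => (abs_le.1 (habs t ht)).2⟩
      have hbddB : BddBelow fiber := ⟨-R, fun t ht => (abs_le.1 (habs t ht)).1⟩
      have hne' : fiber.Nonempty := ⟨t₀, ht₀⟩
      set a := sInf fiber with ha
      set b := sSup fiber with hb
      have hab : a < b := by
        obtain ⟨δ, hδ, hsub⟩ := hopen t₀ ht₀
        have h1 : t₀ - δ/2 ∈ fiber := hsub ⟨by linarith, by linarith⟩
        have h2 : t₀ + δ/2 ∈ fiber := hsub ⟨by linarith, by linarith⟩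
        calc a ≤ t₀ - δ/2 := csInf_le hbddB h1
        _ < t₀ + δ/2 := by linarith
        _ ≤ b := le_csSup hbddA h2
      have hIoo : fiber = Ioo a b := by
        apply Set.Subset.antisymm
        · intro t ht
          obtain ⟨δ, hδ, hsub⟩ := hopen t ht
          have h1 : t - δ/2 ∈ fiber := hsub ⟨by linarith, by linarith⟩
          have h2 : t + δ/2 ∈ fiber := hsub ⟨by linarith, by linarith⟩
          constructor
          · calc a ≤ t - δ/2 := csInf_le hbddB h1
            _ < t := by linarith
          · calc t < t + δ/2 := by linarith
            _ ≤ b := le_csSup hbddA h2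
        · intro t ht
          obtain ⟨u, hu, hut⟩ := exists_lt_of_csInf_lt hne' ht.1
          obtain ⟨v, hv, htv⟩ := exists_lt_of_lt_csSup hne' ht.2
          exact hconv.ordConnected.out hu hv ⟨le_of_lt hut, le_of_lt htv⟩
      refine ⟨ind (Ico a b), fun t => ?_, ?_, ?_⟩
      · have := ev_ioo hab t
        filter_upwards [this] with u hu
        rw [hind u, hIoo]
        exact hu
      · have heq : (fun t => ind C (Fin.snoc x t) - ind (Ico a b) t)
            = fun t => if t = a then (-1:ℤ) else 0 := by
          funext t
          rw [hind t, hIoo]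
          exact congrFun (diff_ioo hab) t
        rw [heq]
        exact support_if_single _
      · have heq : (fun t => ind C (Fin.snoc x t) - ind (Ico a b) t)
            = fun t => if t = a then (-1:ℤ) else 0 := by
          funext t
          rw [hind t, hIoo]
          exact congrFun (diff_ioo hab) t
        rw [heq, finsum_if_single, if_pos he, ind_of_mem hxD]
        ring
    · -- vertical direction not inside: fiber is a single point
      have hfibs : fiber = {t₀} := by
        apply Set.Subset.antisymm
        · intro t ht
          by_contra hne
          simp only [Set.mem_singleton_iff] at hne
          have h1 : (Fin.snoc x t : Fin (n+1) → ℝ) - Fin.snoc x t₀ ∈ vectorSpan ℝ P := by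
            have := AffineSubspace.vsub_mem_direction
              (subset_affineSpan ℝ P (intrinsicInterior_subset ht))
              (subset_affineSpan ℝ P (intrinsicInterior_subset ht₀))
            rwa [direction_affineSpan] at this
          rw [snoc_sub] at h1
          have h2 : evec n ∈ vectorSpan ℝ P := by
            have := Submodule.smul_mem _ (t - t₀)⁻¹ h1
            rwa [smul_smul, inv_mul_cancel₀ (sub_ne_zero.2 hne), one_smul] at this
          exact he h2
        · intro t ht
          rw [Set.mem_singleton_iff] at ht
          subst ht
          exact ht₀
      refine ⟨fun _ => 0, fun t => ?_, ?_, ?_⟩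
      · filter_upwards [ev_sing t₀ t] with u hu
        rw [hind u, hfibs]
        exact hu
      · have heq : (fun t => ind C (Fin.snoc x t) - 0)
            = fun t => if t = t₀ then (1:ℤ) else 0 := by
          funext t
          rw [hind t, hfibs]
          exact congrFun (diff_sing t₀) t
        rw [heq]
        exact support_if_single _
      · have heq : (fun t => ind C (Fin.snoc x t) - 0)
            = fun t => if t = t₀ then (1:ℤ) else 0 := by
          funext t
          rw [hind t, hfibs]
          exact congrFun (diff_sing t₀) t
        rw [heq, finsum_if_single, if_neg he, ind_of_mem hxD]
        ring
  · -- x not in the projected relative interior: empty fiber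
    have hfe : fiber = ∅ := by
      rw [Set.eq_empty_iff_forall_notMem]
      intro t ht
      exact hxD (hCD ▸ ⟨Fin.snoc x t, ht, proj_snoc x t⟩)
    refine ⟨fun _ => 0, fun t => ?_, ?_, ?_⟩
    · apply Filter.Eventually.of_forall
      intro u
      rw [hind u, hfe]
      exact ind_of_not_mem (Set.notMem_empty u)
    · have heq : (fun t => ind C (Fin.snoc x t) - 0) = fun _ => (0:ℤ) := by
        funext t
        rw [hind t, hfe, sub_zero]
        exact ind_of_not_mem (Set.notMem_empty t)
      rw [heq]
      simp
    · have heq : (fun t => ind C (Fin.snoc x t) - 0) = fun _ => (0:ℤ) := by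
        funext t
        rw [hind t, hfe, sub_zero]
        exact ind_of_not_mem (Set.notMem_empty t)
      rw [heq, ind_of_not_mem hxD]
      simp

lemma proj_zero_iff {n : ℕ} (v : Fin (n+1) → ℝ) :
    proj n v = 0 ↔ v = v (Fin.last n) • evec n := by
  constructor
  · intro h
    funext i
    refine Fin.lastCases ?_ ?_ i
    · simp only [Pi.smul_apply, evec, Pi.single_eq_same, smul_eq_mul, mul_one]
    · intro j
      have := congrFun h j
      show v (Fin.castSucc j) = (v (Fin.last n) • evec n) (Fin.castSucc j)
      rw [show proj n v j = v (Fin.castSucc j) from rfl] at this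
      rw [this]
      simp only [Pi.smul_apply, evec, Pi.single_eq_of_ne (Fin.castSucc_lt_last j).ne,
        smul_eq_mul, mul_zero]
      rfl
  · intro h
    rw [h, map_smul, proj_evec, smul_zero]

lemma dim_drop {n : ℕ} (s : Finset (Fin (n+1) → ℝ)) :
    (if evec n ∈ vectorSpan ℝ (convexHull ℝ (↑s : Set (Fin (n+1) → ℝ))) then (-1:ℤ) else 1)
      * (-1 : ℤ)^(Module.finrank ℝ ↥(vectorSpan ℝ (convexHull ℝ (↑(s.image (proj n)) : Set (Fin n → ℝ)))))
    = (-1 : ℤ)^(Module.finrank ℝ ↥(vectorSpan ℝ (convexHull ℝ (↑s : Set (Fin (n+1) → ℝ))))) := by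
  classical
  rw [vs_hull, vs_hull]
  set V := vectorSpan ℝ (↑s : Set (Fin (n+1) → ℝ)) with hV
  set W := vectorSpan ℝ (↑(s.image (proj n)) : Set (Fin n → ℝ)) with hW
  have hWmap : V.map (proj n) = W := by
    rw [hV, hW, Finset.coe_image]
    have := AffineMap.vectorSpan_image_eq_submodule_map (k := ℝ) (f := (proj n).toAffineMap)
      (s := (↑s : Set (Fin (n+1) → ℝ)))
    simpa using this
  have hrank := LinearMap.finrank_range_add_finrank_ker ((proj n).domRestrict V)
  rw [LinearMap.range_domRestrict, hWmap] at hrank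
  by_cases he : evec n ∈ V
  · -- kernel is the line spanned by evec
    have hker : LinearMap.ker ((proj n).domRestrict V)
        = Submodule.span ℝ {(⟨evec n, he⟩ : V)} := by
      ext v
      rw [LinearMap.mem_ker, LinearMap.domRestrict_apply, Submodule.mem_span_singleton]
      constructor
      · intro h
        refine ⟨(v : Fin (n+1) → ℝ) (Fin.last n), ?_⟩
        apply Subtype.ext
        exact ((proj_zero_iff (v : Fin (n+1) → ℝ)).1 h).symm
      · rintro ⟨a, rfl⟩
        show proj n (a • evec n) = 0
        rw [map_smul, proj_evec, smul_zero]
    have hkrank : Module.finrank ℝ ↥(LinearMap.ker ((proj n).domRestrict V)) = 1 := by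
      rw [hker]
      apply finrank_span_singleton
      intro h
      exact evec_ne_zero n (congrArg Subtype.val h)
    rw [hkrank] at hrank
    rw [if_pos he, ← hrank, pow_succ]
    ring
  · have hker : LinearMap.ker ((proj n).domRestrict V) = ⊥ := by
      rw [Submodule.eq_bot_iff]
      rintro ⟨v, hv⟩ h
      rw [LinearMap.mem_ker, LinearMap.domRestrict_apply] at h
      have h2 := (proj_zero_iff v).1 h
      apply Subtype.ext
      show v = 0
      by_cases hc : v (Fin.last n) = 0
      · rw [h2, hc, zero_smul]
      · exfalso
        apply he
        rw [h2] at hv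
        have := Submodule.smul_mem V (v (Fin.last n))⁻¹ hv
        rw [smul_smul, inv_mul_cancel₀ hc, one_smul] at this
        exact this
    rw [hker, finrank_bot, add_zero] at hrank
    rw [if_neg he, hrank, one_mul]

noncomputable def stepf {n : ℕ} (f : (Fin (n+1) → ℝ) → ℤ) : (Fin n → ℝ) → ℤ :=
  fun x => ∑ᶠ t : ℝ, (f (Fin.snoc x t) - rlim (fun u => f (Fin.snoc x u)) t)

noncomputable def chi : (n : ℕ) → ((Fin n → ℝ) → ℤ) → ℤ
  | 0 => fun f => f (fun i => i.elim0)
  | (n+1) => fun f => chi n (stepf f)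

lemma finsum_finset_sum {ι : Type*} (s : Finset ι) (F : ι → ℝ → ℤ)
    (h : ∀ i ∈ s, (Function.support (F i)).Finite) :
    ∑ᶠ t, ∑ i ∈ s, F i t = ∑ i ∈ s, ∑ᶠ t, F i t := by
  classical
  induction s using Finset.induction_on with
  | empty => simp
  | insert a s' ha ih =>
    have h1 : (Function.support (F a)).Finite := h a (Finset.mem_insert_self a s')
    have h2 : ∀ i ∈ s', (Function.support (F i)).Finite :=
      fun i hi => h i (Finset.mem_insert_of_mem hi)
    have h3 : (Function.support (fun t => ∑ i ∈ s', F i t)).Finite := by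
      apply Set.Finite.subset (Set.Finite.biUnion s'.finite_toSet h2)
      intro t ht
      simp only [Function.mem_support] at ht
      by_contra hc
      simp only [Set.mem_iUnion, Function.mem_support, not_exists] at hc
      exact ht (Finset.sum_eq_zero (fun i hi => by
        by_contra hne
        exact (hc i hi) hne))
    have heq : (fun t => ∑ i ∈ insert a s', F i t)
        = fun t => F a t + ∑ i ∈ s', F i t := by
      funext t
      exact Finset.sum_insert ha
    rw [heq, finsum_add_distrib h1 h3, Finset.sum_insert ha, ih h2]

lemma chi_combo (n : ℕ) : ∀ (k : ℕ) (c : Fin k → ℤ) (s : Fin k → Finset (Fin n → ℝ)),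
    (∀ i, (s i).Nonempty) →
    chi n (fun x => ∑ i, c i * ind (intrinsicInterior ℝ (convexHull ℝ (↑(s i) : Set (Fin n → ℝ)))) x)
      = ∑ i, c i * (-1 : ℤ)^(Module.finrank ℝ ↥(vectorSpan ℝ (convexHull ℝ (↑(s i) : Set (Fin n → ℝ))))) := by
  induction n with
  | zero =>
    intro k c s hne
    show (∑ i, c i * ind (intrinsicInterior ℝ (convexHull ℝ (↑(s i) : Set (Fin 0 → ℝ)))) (fun i => i.elim0)) = _
    apply Finset.sum_congr rfl
    intro i _
    have hA : (convexHull ℝ (↑(s i) : Set (Fin 0 → ℝ))) = {fun j => j.elim0} := by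
      apply Set.eq_singleton_iff_nonempty_unique_mem.2
      refine ⟨?_, fun y _ => Subsingleton.elim y _⟩
      obtain ⟨y, hy⟩ := hne i
      exact ⟨y, subset_convexHull ℝ _ hy⟩
    have hind1 : ind (intrinsicInterior ℝ (convexHull ℝ (↑(s i) : Set (Fin 0 → ℝ)))) (fun j => j.elim0) = 1 := by
      rw [hA, intrinsicInterior_singleton]
      exact ind_of_mem (Set.mem_singleton _)
    have hrank : Module.finrank ℝ ↥(vectorSpan ℝ (convexHull ℝ (↑(s i) : Set (Fin 0 → ℝ)))) = 0 := by
      have h1 : Module.finrank ℝ (Fin 0 → ℝ) = 0 := by simp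
      have h2 := Submodule.finrank_le (vectorSpan ℝ (convexHull ℝ (↑(s i) : Set (Fin 0 → ℝ))))
      omega
    rw [hind1, hrank, pow_zero]
  | succ n ih =>
    intro k c s hne
    set ε : Fin k → ℤ := fun i =>
      if evec n ∈ vectorSpan ℝ (convexHull ℝ (↑(s i) : Set (Fin (n+1) → ℝ))) then -1 else 1 with hε
    have key : stepf (fun x => ∑ i, c i *
          ind (intrinsicInterior ℝ (convexHull ℝ (↑(s i) : Set (Fin (n+1) → ℝ)))) x)
        = fun x => ∑ i, (c i * ε i) *
          ind (intrinsicInterior ℝ (convexHull ℝ (↑((s i).image (proj n)) : Set (Fin n → ℝ)))) x := by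
      funext x
      choose r hev hsupp hsum using fun i => shape (s i) x
      show ∑ᶠ t : ℝ, ((∑ i, c i * ind (intrinsicInterior ℝ (convexHull ℝ (↑(s i) : Set (Fin (n+1) → ℝ)))) (Fin.snoc x t))
          - rlim (fun u => ∑ i, c i * ind (intrinsicInterior ℝ (convexHull ℝ (↑(s i) : Set (Fin (n+1) → ℝ)))) (Fin.snoc x u)) t) = _
      have hr : ∀ t, rlim (fun u => ∑ i, c i *
          ind (intrinsicInterior ℝ (convexHull ℝ (↑(s i) : Set (Fin (n+1) → ℝ)))) (Fin.snoc x u)) t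
          = ∑ i, c i * r i t := by
        intro t
        apply rlim_eq_of_eventually
        have : ∀ᶠ u in nhdsWithin t (Set.Ioi t), ∀ i,
            ind (intrinsicInterior ℝ (convexHull ℝ (↑(s i) : Set (Fin (n+1) → ℝ)))) (Fin.snoc x u) = r i t :=
          eventually_all.2 (fun i => hev i t)
        filter_upwards [this] with u hu
        exact Finset.sum_congr rfl (fun i _ => by rw [hu i])
      have hintegrand : (fun t => (∑ i, c i * ind (intrinsicInterior ℝ (convexHull ℝ (↑(s i) : Set (Fin (n+1) → ℝ)))) (Fin.snoc x t))
          - rlim (fun u => ∑ i, c i * ind (intrinsicInterior ℝ (convexHull ℝ (↑(s i) : Set (Fin (n+1) → ℝ)))) (Fin.snoc x u)) t)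
          = fun t => ∑ i, c i * (ind (intrinsicInterior ℝ (convexHull ℝ (↑(s i) : Set (Fin (n+1) → ℝ)))) (Fin.snoc x t) - r i t) := by
        funext t
        rw [hr t, ← Finset.sum_sub_distrib]
        exact Finset.sum_congr rfl (fun i _ => by ring)
      rw [hintegrand]
      have hsupp' : ∀ i ∈ Finset.univ, (Function.support (fun t =>
          c i * (ind (intrinsicInterior ℝ (convexHull ℝ (↑(s i) : Set (Fin (n+1) → ℝ)))) (Fin.snoc x t) - r i t))).Finite := by
        intro i _
        apply Set.Finite.subset (hsupp i)
        intro t ht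
        simp only [Function.mem_support] at ht ⊢
        intro hc
        exact ht (by rw [hc, mul_zero])
      rw [finsum_finset_sum _ _ hsupp']
      apply Finset.sum_congr rfl
      intro i _
      rw [← mul_finsum _ _, hsum i, hε]
      ring
    show chi n (stepf _) = _
    rw [key, ih k (fun i => c i * ε i) (fun i => (s i).image (proj n))
      (fun i => (hne i).image _)]
    apply Finset.sum_congr rfl
    intro i _
    rw [mul_assoc]
    congr 1
    exact dim_drop (s i)

open Module

lemma ind_decomp {n : ℕ} {m : ℕ} (Y : Set (Fin n → ℝ)) (T : Fin m → Set (Fin n → ℝ))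
    (hd : Pairwise fun i j => Disjoint (intrinsicInterior ℝ (T i)) (intrinsicInterior ℝ (T j)))
    (hU : ⋃ i, intrinsicInterior ℝ (T i) = Y) (x : Fin n → ℝ) :
    ∑ i, ind (intrinsicInterior ℝ (T i)) x = ind Y x := by
  by_cases hx : x ∈ Y
  · rw [ind_of_mem hx]
    have hx' : x ∈ ⋃ i, intrinsicInterior ℝ (T i) := hU ▸ hx
    obtain ⟨i₀, hi₀⟩ := Set.mem_iUnion.1 hx'
    rw [Finset.sum_eq_single_of_mem i₀ (Finset.mem_univ i₀)]
    · exact ind_of_mem hi₀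
    · intro j _ hj
      apply ind_of_not_mem
      intro hmem
      exact Set.disjoint_left.1 (hd hj) hmem hi₀
  · rw [ind_of_not_mem hx]
    apply Finset.sum_eq_zero
    intro i _
    apply ind_of_not_mem
    intro hmem
    exact hx (hU ▸ Set.mem_iUnion.2 ⟨i, hmem⟩)

/-- Let `Y ⊆ ℝⁿ` be a semi-convex set, written in two ways as a disjoint
union of relative interiors of finitely many convex polytopes.  Then the combinatorial
Euler characteristic `μ(Y) = Σᵢ (−1)^{dim Δᵢ}` is independent of the chosen
decomposition. -/
theorem stmt8 {n : ℕ} (Y : Set (Fin n → ℝ)) {k l : ℕ}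
    (Δ : Fin k → Set (Fin n → ℝ)) (Δ' : Fin l → Set (Fin n → ℝ))
    (hΔ : ∀ i, ∃ s : Finset (Fin n → ℝ), s.Nonempty ∧ Δ i = convexHull ℝ ↑s)
    (hΔ' : ∀ j, ∃ s : Finset (Fin n → ℝ), s.Nonempty ∧ Δ' j = convexHull ℝ ↑s)
    (hdisj : Pairwise fun i j => Disjoint (intrinsicInterior ℝ (Δ i)) (intrinsicInterior ℝ (Δ j)))
    (hdisj' : Pairwise fun i j => Disjoint (intrinsicInterior ℝ (Δ' i)) (intrinsicInterior ℝ (Δ' j)))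
    (hY : ⋃ i, intrinsicInterior ℝ (Δ i) = Y)
    (hY' : ⋃ j, intrinsicInterior ℝ (Δ' j) = Y) :
    ∑ i, (-1 : ℤ) ^ (finrank ℝ ↥(vectorSpan ℝ (Δ i))) =
      ∑ j, (-1 : ℤ) ^ (finrank ℝ ↥(vectorSpan ℝ (Δ' j))) := by
  classical
  choose s hsne hseq using hΔ
  choose s' hsne' hseq' using hΔ'
  have h1 := chi_combo n k (fun _ => 1) s hsne
  have h2 := chi_combo n l (fun _ => 1) s' hsne'
  have hf1 : (fun x => ∑ i, (1:ℤ) * ind (intrinsicInterior ℝ (convexHull ℝ (↑(s i) : Set (Fin n → ℝ)))) x)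
      = fun x => ind Y x := by
    funext x
    simp only [one_mul]
    have : ∀ i, convexHull ℝ (↑(s i) : Set (Fin n → ℝ)) = Δ i := fun i => (hseq i).symm
    calc ∑ i, ind (intrinsicInterior ℝ (convexHull ℝ (↑(s i) : Set (Fin n → ℝ)))) x
        = ∑ i, ind (intrinsicInterior ℝ (Δ i)) x := by
          apply Finset.sum_congr rfl; intro i _; rw [this i]
      _ = ind Y x := ind_decomp Y Δ hdisj hY x
  have hf2 : (fun x => ∑ j, (1:ℤ) * ind (intrinsicInterior ℝ (convexHull ℝ (↑(s' j) : Set (Fin n → ℝ)))) x)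
      = fun x => ind Y x := by
    funext x
    simp only [one_mul]
    have : ∀ j, convexHull ℝ (↑(s' j) : Set (Fin n → ℝ)) = Δ' j := fun j => (hseq' j).symm
    calc ∑ j, ind (intrinsicInterior ℝ (convexHull ℝ (↑(s' j) : Set (Fin n → ℝ)))) x
        = ∑ j, ind (intrinsicInterior ℝ (Δ' j)) x := by
          apply Finset.sum_congr rfl; intro j _; rw [this j]
      _ = ind Y x := ind_decomp Y Δ' hdisj' hY' x
  rw [hf1] at h1
  rw [hf2] at h2
  have hd1 : ∀ i, vectorSpan ℝ (Δ i) = vectorSpan ℝ (convexHull ℝ (↑(s i) : Set (Fin n → ℝ))) :=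
    fun i => by rw [hseq i]
  have hd2 : ∀ j, vectorSpan ℝ (Δ' j) = vectorSpan ℝ (convexHull ℝ (↑(s' j) : Set (Fin n → ℝ))) :=
    fun j => by rw [hseq' j]
  calc ∑ i, (-1 : ℤ) ^ (finrank ℝ ↥(vectorSpan ℝ (Δ i)))
      = ∑ i, (1:ℤ) * (-1 : ℤ) ^ (finrank ℝ ↥(vectorSpan ℝ (convexHull ℝ (↑(s i) : Set (Fin n → ℝ))))) := by
        apply Finset.sum_congr rfl; intro i _; rw [hd1 i, one_mul]
    _ = chi n (fun x => ind Y x) := h1.symm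
    _ = ∑ j, (1:ℤ) * (-1 : ℤ) ^ (finrank ℝ ↥(vectorSpan ℝ (convexHull ℝ (↑(s' j) : Set (Fin n → ℝ))))) := h2
    _ = ∑ j, (-1 : ℤ) ^ (finrank ℝ ↥(vectorSpan ℝ (Δ' j))) := by
        apply Finset.sum_congr rfl; intro j _; rw [hd2 j, one_mul]
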